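/- Let ψ = v v† be a pure state on n qubits. Then for every P ∈ P_n: Σ_{Q ∈ P_n} q̃_ψ(Q) · q̃_ψ(QP) = Σ_{Q ∈ P_n} p̃_ψ(Q) · p̃_ψ(QP); that is, the Bell difference distribution of ψ equals the self-convolution of the Pauli distribution of ψ. -/

import Mathlib

open Matrix

noncomputable section

/-- The four 2×2 Pauli matrices: `0 ↦ I`, `1 ↦ X`, `2 ↦ Y`, `3 ↦ Z`. -/
def pauli1 : Fin 4 → Matrix (Fin 2) (Fin 2) ℂ
  | 0 => !![1, 0; 0, 1]
  | 1 => !![0, 1; 1, 0]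
  | 2 => !![0, -Complex.I; Complex.I, 0]
  | 3 => !![1, 0; 0, -1]

/-- The `n`-qubit Pauli operator associated to the string `s : Fin n → Fin 4`. -/
def PauliOp (n : ℕ) (s : Fin n → Fin 4) :
    Matrix (Fin n → Fin 2) (Fin n → Fin 2) ℂ :=
  Matrix.of fun i j => ∏ a, pauli1 (s a) (i a) (j a)

/-- `p̃_ψ(A) := |tr(Aψ)|²/d = tr(Aψ) · conj(tr(Aψ)) / 2^n`. -/
def pTil (n : ℕ) (ψ A : Matrix (Fin n → Fin 2) (Fin n → Fin 2) ℂ) : ℂ :=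
  Matrix.trace (A * ψ) * star (Matrix.trace (A * ψ)) / (2 ^ n : ℂ)

/-- `q̃_ψ(A) := tr(A ψ A† ψᵀ)/2^n`, the Bell overlap distribution. -/
def qTil (n : ℕ) (ψ A : Matrix (Fin n → Fin 2) (Fin n → Fin 2) ℂ) : ℂ :=
  Matrix.trace (A * ψ * Aᴴ * ψᵀ) / (2 ^ n : ℂ)

/-! ### Auxiliary single-qubit structure -/

/-- Group law on Pauli labels (symplectic addition: xor in the encoding). -/
def m4 : Fin 4 → Fin 4 → Fin 4
  | 0, b => b
  | 1, 0 => 1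
  | 1, 1 => 0
  | 1, 2 => 3
  | 1, 3 => 2
  | 2, 0 => 2
  | 2, 1 => 3
  | 2, 2 => 0
  | 2, 3 => 1
  | 3, 0 => 3
  | 3, 1 => 2
  | 3, 2 => 1
  | 3, 3 => 0

/-- Phase appearing in products of single-qubit Paulis. -/
def ph4 : Fin 4 → Fin 4 → ℂ
  | 1, 2 => Complex.I
  | 2, 3 => Complex.I
  | 3, 1 => Complex.I
  | 2, 1 => -Complex.I
  | 3, 2 => -Complex.I
  | 1, 3 => -Complex.I
  | _, _ => 1

/-- Commutation sign of two single-qubit Paulis. -/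
def chi1 : Fin 4 → Fin 4 → ℂ
  | 0, _ => 1
  | _, 0 => 1
  | 1, 1 => 1
  | 2, 2 => 1
  | 3, 3 => 1
  | _, _ => -1

/-- Transpose sign of a single-qubit Pauli. -/
def eps1 : Fin 4 → ℂ
  | 2 => -1
  | _ => 1

lemma m4_m4 (a b : Fin 4) : m4 a (m4 a b) = b := by revert a b; decide

lemma m4_right (a b : Fin 4) : m4 (m4 a b) a = b := by revert a b; decide

lemma m4_eq_zero (a b : Fin 4) : m4 a b = 0 ↔ a = b := by revert a b; decide

lemma pauli1_mul (a b : Fin 4) :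
    pauli1 a * pauli1 b = ph4 a b • pauli1 (m4 a b) := by
  fin_cases a <;> fin_cases b <;>
    · ext i j
      fin_cases i <;> fin_cases j <;>
        simp [pauli1, ph4, m4, Matrix.mul_apply, Fin.sum_univ_two, Complex.I_mul_I]

lemma ph4_mul_star (a b : Fin 4) : ph4 a b * star (ph4 a b) = 1 := by
  fin_cases a <;> fin_cases b <;> simp [ph4, Complex.I_mul_I]

lemma ph4_conj (a b : Fin 4) : ph4 a b * ph4 (m4 a b) a = chi1 a b := by
  fin_cases a <;> fin_cases b <;> simp [ph4, m4, chi1, Complex.I_mul_I]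

lemma chi1_mul (t a b : Fin 4) : chi1 t (m4 a b) = chi1 t a * chi1 t b := by
  fin_cases t <;> fin_cases a <;> fin_cases b <;> simp [chi1, m4]

lemma sum_chi1_zero : ∑ x : Fin 4, chi1 x 0 = (4 : ℂ) := by
  simp [Fin.sum_univ_four, chi1]; norm_num

lemma sum_chi1_ne (c : Fin 4) (hc : c ≠ 0) : ∑ x : Fin 4, chi1 x c = 0 := by
  fin_cases c <;>
    first
      | exact absurd rfl hc
      | simp [Fin.sum_univ_four, chi1]

lemma eps1_sq (a : Fin 4) : eps1 a * eps1 a = 1 := by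
  fin_cases a <;> simp [eps1]

lemma pauli1_transpose_entry (a : Fin 4) (i j : Fin 2) :
    pauli1 a j i = eps1 a * pauli1 a i j := by
  fin_cases a <;> fin_cases i <;> fin_cases j <;> simp [pauli1, eps1]

lemma pauli1_star_entry (a : Fin 4) (i j : Fin 2) :
    star (pauli1 a j i) = pauli1 a i j := by
  fin_cases a <;> fin_cases i <;> fin_cases j <;> simp [pauli1]

lemma sum_pauli1 (i j k l : Fin 2) :
    ∑ x : Fin 4, pauli1 x i j * pauli1 x k l
      = 2 * ((if i = l then (1 : ℂ) else 0) * (if j = k then (1 : ℂ) else 0)) := by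
  fin_cases i <;> fin_cases j <;> fin_cases k <;> fin_cases l <;>
    simp [Fin.sum_univ_four, pauli1, Complex.I_mul_I] <;> ring_nf <;>
    simp [Complex.I_sq] <;> ring

/-! ### Multi-qubit structure -/

variable {n : ℕ}

/-- Pointwise group law on Pauli strings. -/
def mS (s t : Fin n → Fin 4) : Fin n → Fin 4 := fun a => m4 (s a) (t a)

/-- Phase of a product of Pauli strings. -/
def PhS (s t : Fin n → Fin 4) : ℂ := ∏ a, ph4 (s a) (t a)

/-- Commutation character of two Pauli strings. -/
def ChiS (t s : Fin n → Fin 4) : ℂ := ∏ a, chi1 (t a) (s a)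

/-- Transpose sign of a Pauli string. -/
def EpsS (t : Fin n → Fin 4) : ℂ := ∏ a, eps1 (t a)

lemma kron_mul (M N : Fin n → Matrix (Fin 2) (Fin 2) ℂ) :
    (Matrix.of fun i j : Fin n → Fin 2 => ∏ a, M a (i a) (j a)) *
      (Matrix.of fun i j : Fin n → Fin 2 => ∏ a, N a (i a) (j a)) =
    Matrix.of fun i j => ∏ a, (M a * N a) (i a) (j a) := by
  ext i j
  simp only [Matrix.mul_apply, Matrix.of_apply]
  calc ∑ k : Fin n → Fin 2, (∏ a, M a (i a) (k a)) * ∏ a, N a (k a) (j a)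
      = ∑ k : Fin n → Fin 2, ∏ a, (M a (i a) (k a) * N a (k a) (j a)) := by
        exact Finset.sum_congr rfl fun k _ => (Finset.prod_mul_distrib).symm
    _ = ∏ a, ∑ x : Fin 2, M a (i a) x * N a x (j a) :=
        (Fintype.prod_sum fun a x => M a (i a) x * N a x (j a)).symm
    _ = ∏ a, (M a * N a) (i a) (j a) := by
        exact Finset.prod_congr rfl fun a _ => (Matrix.mul_apply).symm

lemma pauliOp_mul (s t : Fin n → Fin 4) :
    PauliOp n s * PauliOp n t = PhS s t • PauliOp n (mS s t) := by
  unfold PauliOp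
  rw [kron_mul]
  ext i j
  simp only [Matrix.of_apply, Matrix.smul_apply, smul_eq_mul]
  calc ∏ a, (pauli1 (s a) * pauli1 (t a)) (i a) (j a)
      = ∏ a, (ph4 (s a) (t a) * pauli1 (m4 (s a) (t a)) (i a) (j a)) := by
        refine Finset.prod_congr rfl fun a _ => ?_
        rw [pauli1_mul]
        simp
    _ = PhS s t * ∏ a, pauli1 (mS s t a) (i a) (j a) := Finset.prod_mul_distrib
    _ = PhS s t * PauliOp n (mS s t) i j := rfl

lemma PhS_mul_star (s t : Fin n → Fin 4) : PhS s t * star (PhS s t) = 1 := by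
  unfold PhS
  rw [star_prod, ← Finset.prod_mul_distrib]
  rw [Finset.prod_congr rfl fun a _ => ph4_mul_star (s a) (t a)]
  simp

lemma pauliOp_conj (t s : Fin n → Fin 4) :
    PauliOp n t * PauliOp n s * PauliOp n t = ChiS t s • PauliOp n s := by
  rw [pauliOp_mul, Matrix.smul_mul, pauliOp_mul]
  have h1 : mS (mS t s) t = s := funext fun a => m4_right (t a) (s a)
  rw [h1, smul_smul]
  congr 1
  unfold PhS ChiS mS
  rw [← Finset.prod_mul_distrib]
  exact Finset.prod_congr rfl fun a _ => ph4_conj (t a) (s a)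

lemma pauliOp_conjTranspose (t : Fin n → Fin 4) :
    (PauliOp n t)ᴴ = PauliOp n t := by
  ext i j
  simp only [Matrix.conjTranspose_apply, PauliOp, Matrix.of_apply]
  rw [star_prod]
  exact Finset.prod_congr rfl fun a _ => pauli1_star_entry (t a) (i a) (j a)

lemma pauliOp_transpose (t : Fin n → Fin 4) :
    (PauliOp n t)ᵀ = EpsS t • PauliOp n t := by
  ext i j
  simp only [Matrix.transpose_apply, PauliOp, Matrix.of_apply, Matrix.smul_apply,
    smul_eq_mul]
  rw [Finset.prod_congr rfl fun a _ => pauli1_transpose_entry (t a) (i a) (j a),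
    Finset.prod_mul_distrib]
  rfl

lemma sum_pauliOp_entry (i j k l : Fin n → Fin 2) :
    ∑ s : Fin n → Fin 4, PauliOp n s i j * PauliOp n s k l
      = (2 : ℂ) ^ n * ((if i = l then (1 : ℂ) else 0) * (if j = k then (1 : ℂ) else 0)) := by
  simp only [PauliOp, Matrix.of_apply]
  calc ∑ s : Fin n → Fin 4, (∏ a, pauli1 (s a) (i a) (j a)) * ∏ a, pauli1 (s a) (k a) (l a)
      = ∑ s : Fin n → Fin 4, ∏ a, (pauli1 (s a) (i a) (j a) * pauli1 (s a) (k a) (l a)) :=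
        Finset.sum_congr rfl fun s _ => (Finset.prod_mul_distrib).symm
    _ = ∏ a, ∑ x : Fin 4, pauli1 x (i a) (j a) * pauli1 x (k a) (l a) :=
        (Fintype.prod_sum fun a x => pauli1 x (i a) (j a) * pauli1 x (k a) (l a)).symm
    _ = ∏ a, ((2 : ℂ) * ((if i a = l a then (1 : ℂ) else 0) * (if j a = k a then (1 : ℂ) else 0))) :=
        Finset.prod_congr rfl fun a _ => sum_pauli1 (i a) (j a) (k a) (l a)
    _ = (2 : ℂ) ^ n * ((if i = l then (1 : ℂ) else 0) * (if j = k then (1 : ℂ) else 0)) := by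
        rw [Finset.prod_mul_distrib, Finset.prod_mul_distrib, Finset.prod_const]
        congr 1
        · simp
        · congr 1
          · rw [Finset.prod_boole]
            simp [funext_iff]
          · rw [Finset.prod_boole]
            simp [funext_iff]

lemma sum_trace_smul (A : Matrix (Fin n → Fin 2) (Fin n → Fin 2) ℂ) :
    ∑ s : Fin n → Fin 4, Matrix.trace (PauliOp n s * A) • PauliOp n s
      = ((2 : ℂ) ^ n) • A := by
  ext i j
  simp only [Matrix.sum_apply, Matrix.smul_apply, smul_eq_mul, Matrix.trace,
    Matrix.diag_apply, Matrix.mul_apply]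
  calc ∑ s : Fin n → Fin 4, (∑ k, ∑ l, PauliOp n s k l * A l k) * PauliOp n s i j
      = ∑ s : Fin n → Fin 4, ∑ k, ∑ l, A l k * (PauliOp n s k l * PauliOp n s i j) := by
        refine Finset.sum_congr rfl fun s _ => ?_
        rw [Finset.sum_mul]
        refine Finset.sum_congr rfl fun k _ => ?_
        rw [Finset.sum_mul]
        exact Finset.sum_congr rfl fun l _ => by ring
    _ = ∑ k, ∑ l, A l k * ∑ s : Fin n → Fin 4, (PauliOp n s k l * PauliOp n s i j) := by
        rw [Finset.sum_comm]
        refine Finset.sum_congr rfl fun k _ => ?_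
        rw [Finset.sum_comm]
        exact Finset.sum_congr rfl fun l _ => (Finset.mul_sum _ _ _).symm
    _ = ∑ k, ∑ l, A l k *
          ((2 : ℂ) ^ n * ((if k = j then (1 : ℂ) else 0) * (if l = i then (1 : ℂ) else 0))) := by
        refine Finset.sum_congr rfl fun k _ => Finset.sum_congr rfl fun l _ => ?_
        rw [sum_pauliOp_entry]
    _ = (2 : ℂ) ^ n * A i j := by
        simp [mul_ite, ite_mul, Finset.sum_ite_eq, Finset.sum_ite_eq']
        ring

lemma sum_conj_matrix (C : Matrix (Fin n → Fin 2) (Fin n → Fin 2) ℂ) :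
    ∑ s : Fin n → Fin 4, PauliOp n s * C * PauliOp n s
      = ((2 : ℂ) ^ n * Matrix.trace C) • (1 : Matrix (Fin n → Fin 2) (Fin n → Fin 2) ℂ) := by
  ext i l
  rw [Matrix.sum_apply]
  calc ∑ s : Fin n → Fin 4, (PauliOp n s * C * PauliOp n s) i l
      = ∑ s : Fin n → Fin 4, ∑ k, ∑ j, C j k * (PauliOp n s i j * PauliOp n s k l) := by
        refine Finset.sum_congr rfl fun s _ => ?_
        simp only [Matrix.mul_apply]
        refine Finset.sum_congr rfl fun k _ => ?_
        rw [Finset.sum_mul]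
        exact Finset.sum_congr rfl fun j _ => by ring
    _ = ∑ k, ∑ j, C j k * ∑ s : Fin n → Fin 4, (PauliOp n s i j * PauliOp n s k l) := by
        rw [Finset.sum_comm]
        refine Finset.sum_congr rfl fun k _ => ?_
        rw [Finset.sum_comm]
        exact Finset.sum_congr rfl fun j _ => (Finset.mul_sum _ _ _).symm
    _ = ∑ k, ∑ j, (if j = k then (2 : ℂ) ^ n * C j k else 0) * (if i = l then (1 : ℂ) else 0) := by
        refine Finset.sum_congr rfl fun k _ => Finset.sum_congr rfl fun j _ => ?_
        rw [sum_pauliOp_entry]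
        by_cases h1 : j = k <;> by_cases h2 : i = l <;> simp [h1, h2] <;> ring
    _ = (∑ k, (2 : ℂ) ^ n * C k k) * (if i = l then (1 : ℂ) else 0) := by
        rw [Finset.sum_mul]
        refine Finset.sum_congr rfl fun k _ => ?_
        rw [← Finset.sum_mul, Finset.sum_ite_eq' Finset.univ k fun j => (2 : ℂ) ^ n * C j k]
        simp
    _ = (((2 : ℂ) ^ n * Matrix.trace C) • (1 : Matrix (Fin n → Fin 2) (Fin n → Fin 2) ℂ)) i l := by
        simp only [Matrix.smul_apply, Matrix.one_apply, smul_eq_mul, Matrix.trace,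
          Matrix.diag_apply]
        rw [← Finset.mul_sum]

lemma sum_trace_mul (A B : Matrix (Fin n → Fin 2) (Fin n → Fin 2) ℂ) :
    ∑ s : Fin n → Fin 4, Matrix.trace (PauliOp n s * A) * Matrix.trace (PauliOp n s * B)
      = (2 : ℂ) ^ n * Matrix.trace (A * B) := by
  calc ∑ s : Fin n → Fin 4, Matrix.trace (PauliOp n s * A) * Matrix.trace (PauliOp n s * B)
      = Matrix.trace ((∑ s : Fin n → Fin 4, Matrix.trace (PauliOp n s * A) • PauliOp n s) * B) := by
        rw [Finset.sum_mul, Matrix.trace_sum]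
        exact Finset.sum_congr rfl fun s _ => by rw [Matrix.smul_mul, Matrix.trace_smul, smul_eq_mul]
    _ = Matrix.trace (((2 : ℂ) ^ n • A) * B) := by rw [sum_trace_smul]
    _ = (2 : ℂ) ^ n * Matrix.trace (A * B) := by rw [Matrix.smul_mul, Matrix.trace_smul, smul_eq_mul]

lemma sum_trace_conj (C D : Matrix (Fin n → Fin 2) (Fin n → Fin 2) ℂ) :
    ∑ s : Fin n → Fin 4, Matrix.trace (PauliOp n s * C * PauliOp n s * D)
      = (2 : ℂ) ^ n * Matrix.trace C * Matrix.trace D := by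
  calc ∑ s : Fin n → Fin 4, Matrix.trace (PauliOp n s * C * PauliOp n s * D)
      = Matrix.trace ((∑ s : Fin n → Fin 4, PauliOp n s * C * PauliOp n s) * D) := by
        rw [Finset.sum_mul, Matrix.trace_sum]
    _ = Matrix.trace ((((2 : ℂ) ^ n * Matrix.trace C) • (1 : Matrix _ _ ℂ)) * D) := by
        rw [sum_conj_matrix]
    _ = (2 : ℂ) ^ n * Matrix.trace C * Matrix.trace D := by
        rw [Matrix.smul_mul, Matrix.trace_smul, one_mul, smul_eq_mul]

/-! ### Fourier analysis on Pauli strings -/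

lemma ChiS_mul (t s u : Fin n → Fin 4) : ChiS t (mS s u) = ChiS t s * ChiS t u := by
  unfold ChiS mS
  rw [← Finset.prod_mul_distrib]
  exact Finset.prod_congr rfl fun a _ => chi1_mul (t a) (s a) (u a)

lemma sum_ChiS (u : Fin n → Fin 4) :
    ∑ t : Fin n → Fin 4, ChiS t u = if u = (fun _ => 0) then (4 : ℂ) ^ n else 0 := by
  unfold ChiS
  rw [← Fintype.prod_sum fun a x => chi1 x (u a)]
  have hval : ∀ a, ∑ x : Fin 4, chi1 x (u a) = if u a = 0 then (4 : ℂ) else 0 := by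
    intro a
    by_cases h : u a = 0
    · rw [if_pos h, h]; exact sum_chi1_zero
    · rw [if_neg h]; exact sum_chi1_ne _ h
  rw [Finset.prod_congr rfl fun a _ => hval a]
  by_cases h : u = fun _ => 0
  · subst h; simp
  · rw [if_neg h]
    obtain ⟨a, ha⟩ : ∃ a, u a ≠ 0 := by
      by_contra hc
      push_neg at hc
      exact h (funext hc)
    exact Finset.prod_eq_zero (Finset.mem_univ a) (by rw [if_neg ha])

lemma sum_ChiS_mul (s u : Fin n → Fin 4) :
    ∑ t : Fin n → Fin 4, ChiS t s * ChiS t u = if s = u then (4 : ℂ) ^ n else 0 := by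
  rw [Finset.sum_congr rfl fun t _ => (ChiS_mul t s u).symm, sum_ChiS]
  congr 1
  simp only [eq_iff_iff]
  constructor
  · intro h
    funext a
    have := congrFun h a
    exact (m4_eq_zero (s a) (u a)).1 this
  · intro h
    subst h
    funext a
    exact (m4_eq_zero (s a) (s a)).2 rfl

lemma fourier_inj (F G : (Fin n → Fin 4) → ℂ)
    (h : ∀ t, ∑ u : Fin n → Fin 4, ChiS t u * F u = ∑ u : Fin n → Fin 4, ChiS t u * G u)
    (s : Fin n → Fin 4) : F s = G s := by
  have key : ∀ H : (Fin n → Fin 4) → ℂ,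
      ∑ t : Fin n → Fin 4, ChiS t s * ∑ u : Fin n → Fin 4, ChiS t u * H u
        = (4 : ℂ) ^ n * H s := by
    intro H
    calc ∑ t : Fin n → Fin 4, ChiS t s * ∑ u : Fin n → Fin 4, ChiS t u * H u
        = ∑ t : Fin n → Fin 4, ∑ u : Fin n → Fin 4, ChiS t s * ChiS t u * H u := by
          refine Finset.sum_congr rfl fun t _ => ?_
          rw [Finset.mul_sum]
          exact Finset.sum_congr rfl fun u _ => by ring
      _ = ∑ u : Fin n → Fin 4, (∑ t : Fin n → Fin 4, ChiS t s * ChiS t u) * H u := by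
          rw [Finset.sum_comm]
          exact Finset.sum_congr rfl fun u _ => (Finset.sum_mul _ _ _).symm
      _ = ∑ u : Fin n → Fin 4, (if s = u then (4 : ℂ) ^ n else 0) * H u := by
          exact Finset.sum_congr rfl fun u _ => by rw [sum_ChiS_mul]
      _ = (4 : ℂ) ^ n * H s := by
          simp [ite_mul, Finset.sum_ite_eq]
  have h4 : ((4 : ℂ) ^ n) ≠ 0 := pow_ne_zero _ (by norm_num)
  apply mul_left_cancel₀ h4
  rw [← key F, ← key G]
  exact Finset.sum_congr rfl fun t _ => by rw [h t]

lemma mS_involutive (s' : Fin n → Fin 4) : Function.Involutive (mS s') := by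
  intro u
  funext a
  exact m4_m4 (s' a) (u a)

lemma hat_conv (f : (Fin n → Fin 4) → ℂ) (t : Fin n → Fin 4) :
    ∑ u : Fin n → Fin 4, ChiS t u * ∑ s' : Fin n → Fin 4, f s' * f (mS s' u)
      = (∑ s' : Fin n → Fin 4, ChiS t s' * f s') *
        (∑ u : Fin n → Fin 4, ChiS t u * f u) := by
  calc ∑ u : Fin n → Fin 4, ChiS t u * ∑ s' : Fin n → Fin 4, f s' * f (mS s' u)
      = ∑ u : Fin n → Fin 4, ∑ s' : Fin n → Fin 4, ChiS t u * (f s' * f (mS s' u)) := by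
        exact Finset.sum_congr rfl fun u _ => Finset.mul_sum _ _ _
    _ = ∑ s' : Fin n → Fin 4, ∑ u : Fin n → Fin 4, ChiS t u * (f s' * f (mS s' u)) :=
        Finset.sum_comm
    _ = ∑ s' : Fin n → Fin 4, ∑ w : Fin n → Fin 4,
          ChiS t (mS s' w) * (f s' * f (mS s' (mS s' w))) := by
        refine Finset.sum_congr rfl fun s' _ => ?_
        exact (Equiv.sum_comp ((mS_involutive s').toPerm _)
          (fun u => ChiS t u * (f s' * f (mS s' u)))).symm
    _ = ∑ s' : Fin n → Fin 4, ∑ w : Fin n → Fin 4,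
          (ChiS t s' * f s') * (ChiS t w * f w) := by
        refine Finset.sum_congr rfl fun s' _ => Finset.sum_congr rfl fun w _ => ?_
        rw [ChiS_mul, mS_involutive s' w]
        ring
    _ = (∑ s' : Fin n → Fin 4, ChiS t s' * f s') *
        (∑ u : Fin n → Fin 4, ChiS t u * f u) := by
        rw [Finset.sum_mul]
        exact Finset.sum_congr rfl fun s' _ => (Finset.mul_sum _ _ _).symm

/-! ### Pure-state computations -/

lemma trace_mul_vecMulVec {I : Type*} [Fintype I] (A : Matrix I I ℂ) (v w : I → ℂ) :
    Matrix.trace (A * Matrix.vecMulVec v w) = w ⬝ᵥ (A *ᵥ v) := by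
  simp only [Matrix.trace, Matrix.diag_apply, Matrix.mul_apply, Matrix.vecMulVec_apply,
    dotProduct, Matrix.mulVec, dotProduct]
  refine Finset.sum_congr rfl fun i _ => ?_
  rw [Finset.mul_sum]
  exact Finset.sum_congr rfl fun j _ => by ring

lemma vecMulVec_mulVec' {I : Type*} [Fintype I] (v w u : I → ℂ) :
    Matrix.vecMulVec v w *ᵥ u = (w ⬝ᵥ u) • v := by
  funext i
  simp only [Matrix.mulVec, dotProduct, Matrix.vecMulVec_apply, Pi.smul_apply, smul_eq_mul]
  rw [Finset.sum_mul]
  exact Finset.sum_congr rfl fun j _ => by ring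

lemma vecMulVec_conjTranspose' {I : Type*} (v : I → ℂ) :
    (Matrix.vecMulVec v (star v))ᴴ = Matrix.vecMulVec v (star v) := by
  ext i j
  simp only [Matrix.conjTranspose_apply, Matrix.vecMulVec_apply, Pi.star_apply]
  rw [star_mul']
  simp [mul_comm]

lemma vecMulVec_transpose' {I : Type*} (v w : I → ℂ) :
    (Matrix.vecMulVec v w)ᵀ = Matrix.vecMulVec w v := by
  ext i j
  simp [Matrix.vecMulVec_apply, mul_comm]

section PureState

variable (v : (Fin n → Fin 2) → ℂ)

local notation "ψ" => Matrix.vecMulVec v (star v)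

lemma star_alpha (t : Fin n → Fin 4) :
    star (Matrix.trace (PauliOp n t * ψ)) = Matrix.trace (PauliOp n t * ψ) := by
  rw [← Matrix.trace_conjTranspose, Matrix.conjTranspose_mul, vecMulVec_conjTranspose',
    pauliOp_conjTranspose, Matrix.trace_mul_comm]

lemma trace_PtψPtψ (t : Fin n → Fin 4) :
    Matrix.trace (PauliOp n t * ψ * PauliOp n t * ψ)
      = Matrix.trace (PauliOp n t * ψ) * Matrix.trace (PauliOp n t * ψ) := by
  have hα : Matrix.trace (PauliOp n t * ψ) = star v ⬝ᵥ (PauliOp n t *ᵥ v) :=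
    trace_mul_vecMulVec _ _ _
  rw [trace_mul_vecMulVec, hα]
  rw [← Matrix.mulVec_mulVec, ← Matrix.mulVec_mulVec, vecMulVec_mulVec',
    Matrix.mulVec_smul, dotProduct_smul, smul_eq_mul]

end PureState

/-! ### Phase invariance -/

lemma pTil_smul (c : ℂ) (hc : c * star c = 1)
    (ψ A : Matrix (Fin n → Fin 2) (Fin n → Fin 2) ℂ) :
    pTil n ψ (c • A) = pTil n ψ A := by
  unfold pTil
  rw [Matrix.smul_mul, Matrix.trace_smul, smul_eq_mul, star_mul']
  have : c * Matrix.trace (A * ψ) * (star c * star (Matrix.trace (A * ψ)))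
      = (c * star c) * (Matrix.trace (A * ψ) * star (Matrix.trace (A * ψ))) := by ring
  rw [this, hc, one_mul]

lemma qTil_smul (c : ℂ) (hc : c * star c = 1)
    (ψ A : Matrix (Fin n → Fin 2) (Fin n → Fin 2) ℂ) :
    qTil n ψ (c • A) = qTil n ψ A := by
  unfold qTil
  have hc' : star c * c = 1 := by rw [mul_comm]; exact hc
  have h : (c • A) * ψ * (c • A)ᴴ * ψᵀ = (star c * c) • (A * ψ * Aᴴ * ψᵀ) := by
    rw [Matrix.conjTranspose_smul]
    simp only [Matrix.smul_mul, Matrix.mul_smul, smul_smul]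
  rw [h, hc', one_smul]

/-! ### The hat computations -/

section Hats

variable (v : (Fin n → Fin 2) → ℂ)

local notation "ψ" => Matrix.vecMulVec v (star v)

set_option maxHeartbeats 1000000 in
lemma hat_p (t : Fin n → Fin 4) :
    ∑ u : Fin n → Fin 4, ChiS t u * pTil n ψ (PauliOp n u)
      = Matrix.trace (PauliOp n t * ψ) * Matrix.trace (PauliOp n t * ψ) := by
  have h2 : ((2 : ℂ) ^ n) ≠ 0 := pow_ne_zero _ (by norm_num)
  have key : ∀ u : Fin n → Fin 4,
      Matrix.trace (PauliOp n u * (PauliOp n t * ψ * PauliOp n t))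
        = ChiS t u * Matrix.trace (PauliOp n u * ψ) := by
    intro u
    calc Matrix.trace (PauliOp n u * (PauliOp n t * ψ * PauliOp n t))
        = Matrix.trace ((PauliOp n u * PauliOp n t * ψ) * PauliOp n t) := by
          congr 1
          simp only [Matrix.mul_assoc]
      _ = Matrix.trace (PauliOp n t * (PauliOp n u * PauliOp n t * ψ)) :=
          Matrix.trace_mul_comm _ _
      _ = Matrix.trace ((PauliOp n t * PauliOp n u * PauliOp n t) * ψ) := by
          congr 1
          simp only [Matrix.mul_assoc]
      _ = Matrix.trace ((ChiS t u • PauliOp n u) * ψ) := by rw [pauliOp_conj]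
      _ = ChiS t u * Matrix.trace (PauliOp n u * ψ) := by
          rw [Matrix.smul_mul, Matrix.trace_smul, smul_eq_mul]
  calc ∑ u : Fin n → Fin 4, ChiS t u * pTil n ψ (PauliOp n u)
      = (∑ u : Fin n → Fin 4,
          Matrix.trace (PauliOp n u * (PauliOp n t * ψ * PauliOp n t)) *
            Matrix.trace (PauliOp n u * ψ)) / (2 : ℂ) ^ n := by
        rw [Finset.sum_div]
        refine Finset.sum_congr rfl fun u _ => ?_
        unfold pTil
        rw [star_alpha, key]
        ring
    _ = Matrix.trace (PauliOp n t * ψ * PauliOp n t * ψ) := by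
        rw [sum_trace_mul]
        exact mul_div_cancel_left₀ _ h2
    _ = Matrix.trace (PauliOp n t * ψ) * Matrix.trace (PauliOp n t * ψ) := trace_PtψPtψ v t

set_option maxHeartbeats 1000000 in
lemma hat_q (t : Fin n → Fin 4) :
    ∑ u : Fin n → Fin 4, ChiS t u * qTil n ψ (PauliOp n u)
      = EpsS t * (Matrix.trace (PauliOp n t * ψ) * Matrix.trace (PauliOp n t * ψ)) := by
  have h2 : ((2 : ℂ) ^ n) ≠ 0 := pow_ne_zero _ (by norm_num)
  have key : ∀ u : Fin n → Fin 4,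
      Matrix.trace (PauliOp n u * (PauliOp n t * ψ) * PauliOp n u * (ψᵀ * PauliOp n t))
        = ChiS t u * Matrix.trace (PauliOp n u * ψ * PauliOp n u * ψᵀ) := by
    intro u
    calc Matrix.trace (PauliOp n u * (PauliOp n t * ψ) * PauliOp n u * (ψᵀ * PauliOp n t))
        = Matrix.trace ((PauliOp n u * (PauliOp n t * ψ) * PauliOp n u * ψᵀ) * PauliOp n t) := by
          congr 1
          simp only [Matrix.mul_assoc]
      _ = Matrix.trace (PauliOp n t * (PauliOp n u * (PauliOp n t * ψ) * PauliOp n u * ψᵀ)) :=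
          Matrix.trace_mul_comm _ _
      _ = Matrix.trace ((PauliOp n t * PauliOp n u * PauliOp n t) * (ψ * (PauliOp n u * ψᵀ))) := by
          congr 1
          simp only [Matrix.mul_assoc]
      _ = Matrix.trace ((ChiS t u • PauliOp n u) * (ψ * (PauliOp n u * ψᵀ))) := by
          rw [pauliOp_conj]
      _ = ChiS t u * Matrix.trace (PauliOp n u * ψ * PauliOp n u * ψᵀ) := by
          rw [Matrix.smul_mul, Matrix.trace_smul, smul_eq_mul]
          congr 2
          simp only [Matrix.mul_assoc]
  have htr : Matrix.trace (ψᵀ * PauliOp n t) = EpsS t * Matrix.trace (PauliOp n t * ψ) := by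
    rw [← Matrix.trace_transpose, Matrix.transpose_mul, Matrix.transpose_transpose,
      pauliOp_transpose, Matrix.smul_mul, Matrix.trace_smul, smul_eq_mul]
  calc ∑ u : Fin n → Fin 4, ChiS t u * qTil n ψ (PauliOp n u)
      = (∑ u : Fin n → Fin 4,
          Matrix.trace (PauliOp n u * (PauliOp n t * ψ) * PauliOp n u * (ψᵀ * PauliOp n t)))
            / (2 : ℂ) ^ n := by
        rw [Finset.sum_div]
        refine Finset.sum_congr rfl fun u _ => ?_
        unfold qTil
        rw [pauliOp_conjTranspose, key]
        ring
    _ = Matrix.trace (PauliOp n t * ψ) * Matrix.trace (ψᵀ * PauliOp n t) := by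
        rw [sum_trace_conj, mul_assoc]
        exact mul_div_cancel_left₀ _ h2
    _ = EpsS t * (Matrix.trace (PauliOp n t * ψ) * Matrix.trace (PauliOp n t * ψ)) := by
        rw [htr]; ring

end Hats

lemma EpsS_sq (t : Fin n → Fin 4) : EpsS t * EpsS t = 1 := by
  unfold EpsS
  rw [← Finset.prod_mul_distrib, Finset.prod_congr rfl fun a _ => eps1_sq (t a)]
  simp

/-! ### Main theorem -/

set_option maxHeartbeats 1000000 in
/-- For a pure state `ψ = v v†`, the Bell difference distribution equals the
self-convolution of the Pauli distribution: for every `P ∈ 𝒫_n`,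
`∑_Q q̃_ψ(Q) q̃_ψ(QP) = ∑_Q p̃_ψ(Q) p̃_ψ(QP)`. -/
theorem bell_difference_eq_pauli_convolution (n : ℕ) (hn : 1 ≤ n)
    (v : (Fin n → Fin 2) → ℂ) (hv : star v ⬝ᵥ v = 1) (s : Fin n → Fin 4) :
    ∑ s' : Fin n → Fin 4,
        qTil n (Matrix.vecMulVec v (star v)) (PauliOp n s') *
          qTil n (Matrix.vecMulVec v (star v)) (PauliOp n s' * PauliOp n s) =
      ∑ s' : Fin n → Fin 4,
        pTil n (Matrix.vecMulVec v (star v)) (PauliOp n s') *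
          pTil n (Matrix.vecMulVec v (star v)) (PauliOp n s' * PauliOp n s) := by
  have hq : ∀ s' : Fin n → Fin 4,
      qTil n (Matrix.vecMulVec v (star v)) (PauliOp n s' * PauliOp n s)
        = qTil n (Matrix.vecMulVec v (star v)) (PauliOp n (mS s' s)) := fun s' => by
    rw [pauliOp_mul]
    exact qTil_smul _ (PhS_mul_star s' s) _ _
  have hp : ∀ s' : Fin n → Fin 4,
      pTil n (Matrix.vecMulVec v (star v)) (PauliOp n s' * PauliOp n s)
        = pTil n (Matrix.vecMulVec v (star v)) (PauliOp n (mS s' s)) := fun s' => by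
    rw [pauliOp_mul]
    exact pTil_smul _ (PhS_mul_star s' s) _ _
  simp_rw [hq, hp]
  refine fourier_inj
    (fun u => ∑ s' : Fin n → Fin 4,
      qTil n (Matrix.vecMulVec v (star v)) (PauliOp n s') *
        qTil n (Matrix.vecMulVec v (star v)) (PauliOp n (mS s' u)))
    (fun u => ∑ s' : Fin n → Fin 4,
      pTil n (Matrix.vecMulVec v (star v)) (PauliOp n s') *
        pTil n (Matrix.vecMulVec v (star v)) (PauliOp n (mS s' u)))
    (fun t => ?_) s
  rw [hat_conv (fun u => qTil n (Matrix.vecMulVec v (star v)) (PauliOp n u)) t,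
    hat_conv (fun u => pTil n (Matrix.vecMulVec v (star v)) (PauliOp n u)) t,
    hat_q, hat_p]
  have h := EpsS_sq t
  set α := Matrix.trace (PauliOp n t * Matrix.vecMulVec v (star v))
  linear_combination (α * α) * (α * α) * h

end
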